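/- Let V be a real inner product space with norm ‖·‖, V_h a linear subspace of V, and W a linear subspace of V_h. Let a : V × V → ℝ be a bilinear form with a(w, w) ≥ μ·α·‖w‖² for all w ∈ W, where μ > 0 and α > 0. Let Q be a real vector space and b : V × Q → ℝ a bilinear form with b(w, q) = 0 for all w ∈ W and all q ∈ Q. Let u ∈ V and let Su, u_h ∈ V_h be such that u_h − Su ∈ W. Assume: (i) ‖Su − v‖ ≤ C₀·‖u − v‖ for all v ∈ V_h; and (ii) there exist a linear functional G : V → ℝ, a constant C₁ ≥ 0 with |G(w)| ≤ C₁·‖w‖ for all w ∈ W, and δ ∈ Q such that a(u_h − Su, w) + b(w, δ) = G(w) for all w ∈ W. Then for every v ∈ V_h, ‖u − u_h‖ ≤ (1 + C₀)·‖u − v‖ + C₁/(μ·α). -/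

import Mathlib

/-- Abstract velocity error estimate: splitting `u − u_h = (u − Su) + (Su − u_h)` with
quasi-optimality of `Su` and coercivity of `a` on the discretely divergence-free subspace
`W` (on which `b` vanishes) together with a consistency functional bound gives
`‖u − u_h‖ ≤ (1 + C₀)·‖u − v‖ + C₁/(μ·α)` for all `v ∈ V_h`. -/
theorem stmt_4 {V Q : Type*} [NormedAddCommGroup V] [InnerProductSpace ℝ V]
    [AddCommGroup Q] [Module ℝ Q]
    (Vh W : Submodule ℝ V) (hWV : W ≤ Vh)
    (a : V →ₗ[ℝ] V →ₗ[ℝ] ℝ) (b : V →ₗ[ℝ] Q →ₗ[ℝ] ℝ)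
    (μ α : ℝ) (hμ : 0 < μ) (hα : 0 < α)
    (hcoer : ∀ w ∈ W, μ * α * ‖w‖ ^ 2 ≤ a w w)
    (hb : ∀ w ∈ W, ∀ q : Q, b w q = 0)
    (u : V) (Su uh : V) (hSu : Su ∈ Vh) (huh : uh ∈ Vh) (hW : uh - Su ∈ W)
    (C₀ : ℝ) (hC₀ : 0 ≤ C₀)
    (hquasi : ∀ v ∈ Vh, ‖Su - v‖ ≤ C₀ * ‖u - v‖)
    (G : V →ₗ[ℝ] ℝ) (C₁ : ℝ) (hC₁ : 0 ≤ C₁)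
    (hG : ∀ w ∈ W, |G w| ≤ C₁ * ‖w‖)
    (δ : Q)
    (herr : ∀ w ∈ W, a (uh - Su) w + b w δ = G w) :
    ∀ v ∈ Vh, ‖u - uh‖ ≤ (1 + C₀) * ‖u - v‖ + C₁ / (μ * α) := by
  intro v hv
  set e := uh - Su with he
  have hae : a e e = G e := by
    have h := herr e hW
    rw [hb e hW δ] at h
    simpa using h
  have hbound : ‖e‖ ≤ C₁ / (μ * α) := by
    have hμα : 0 < μ * α := mul_pos hμ hα
    rcases eq_or_ne ‖e‖ 0 with h0 | h0
    · rw [h0]; positivity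
    · have hpos : 0 < ‖e‖ := lt_of_le_of_ne (norm_nonneg _) (Ne.symm h0)
      have h1 : μ * α * ‖e‖ ^ 2 ≤ C₁ * ‖e‖ := by
        calc μ * α * ‖e‖ ^ 2 ≤ a e e := hcoer e hW
        _ = G e := hae
        _ ≤ |G e| := le_abs_self _
        _ ≤ C₁ * ‖e‖ := hG e hW
      have h2 : μ * α * ‖e‖ ≤ C₁ := by
        have := (mul_le_mul_iff_left₀ hpos).mp (by nlinarith : (μ * α * ‖e‖) * ‖e‖ ≤ C₁ * ‖e‖)
        exact this
      rw [div_eq_inv_mul, ← mul_le_mul_iff_right₀ hμα]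
      calc μ * α * ‖e‖ ≤ C₁ := h2
      _ = μ * α * ((μ * α)⁻¹ * C₁) := by field_simp
  have h3 : ‖u - Su‖ ≤ (1 + C₀) * ‖u - v‖ := by
    calc ‖u - Su‖ = ‖(u - v) + (v - Su)‖ := by rw [show u - Su = u - v + (v - Su) by abel]
    _ ≤ ‖u - v‖ + ‖v - Su‖ := norm_add_le _ _
    _ = ‖u - v‖ + ‖Su - v‖ := by rw [norm_sub_rev v Su]
    _ ≤ ‖u - v‖ + C₀ * ‖u - v‖ := by linarith [hquasi v hv]
    _ = (1 + C₀) * ‖u - v‖ := by ring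
  calc ‖u - uh‖ = ‖(u - Su) + -(uh - Su)‖ := by rw [show u - uh = u - Su + -(uh - Su) by abel]
  _ ≤ ‖u - Su‖ + ‖-(uh - Su)‖ := norm_add_le _ _
  _ = ‖u - Su‖ + ‖e‖ := by rw [norm_neg]
  _ ≤ (1 + C₀) * ‖u - v‖ + C₁ / (μ * α) := add_le_add h3 hbound
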